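/- Let b ≥ 0 be a real number, let z ∈ ℂ be nonzero with principal argument θ = arg z ∈ (−π, π], and let s ∈ ℂ satisfy s² = b + z. Then |s|² ≥ cos(θ/2) · (b + |z|). Moreover, if Re s ≥ 0, then (Re s)² ≥ (1/2) [ (1 + cos(θ/2)) b + (cos(θ/2) + cos θ) |z| ]. -/

import Mathlib

/-- If `s² = b + z` with `b ≥ 0` real and `z ≠ 0`, then
`|s|² ≥ cos(arg z / 2)(b + |z|)`; if moreover `Re s ≥ 0` then
`(Re s)² ≥ (1/2)[(1 + cos(arg z/2)) b + (cos(arg z/2) + cos(arg z)) |z|]`. -/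
theorem stmt_5 (b : ℝ) (hb : 0 ≤ b) (z : ℂ) (hz : z ≠ 0) (s : ℂ)
    (hs : s ^ 2 = (b : ℂ) + z) :
    ‖s‖ ^ 2 ≥ Real.cos (z.arg / 2) * (b + ‖z‖) ∧
    (0 ≤ s.re →
      s.re ^ 2 ≥ (1 / 2) * ((1 + Real.cos (z.arg / 2)) * b +
        (Real.cos (z.arg / 2) + Real.cos z.arg) * ‖z‖)) := by
  have hzpos : 0 < ‖z‖ := by
    simpa [norm_pos_iff] using hz
  have hc0 : 0 ≤ Real.cos (z.arg / 2) := by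
    apply Real.cos_nonneg_of_mem_Icc
    constructor
    · have := Complex.neg_pi_lt_arg z; linarith
    · have := Complex.arg_le_pi z; linarith
  have hc1 : Real.cos (z.arg / 2) ≤ 1 := Real.cos_le_one _
  have hre : z.re = ‖z‖ * Real.cos z.arg := by
    rw [Complex.cos_arg hz]; field_simp
  have hzabs : ‖z‖ ^ 2 = z.re ^ 2 + z.im ^ 2 := by
    rw [Complex.sq_norm, Complex.normSq_apply]; ring
  have hcos : Real.cos z.arg = 2 * Real.cos (z.arg / 2) ^ 2 - 1 := by
    have := Real.cos_sq (z.arg / 2)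
    have h2 : 2 * (z.arg / 2) = z.arg := by ring
    rw [h2] at this
    linarith
  have key4 : ‖s‖ ^ 2 * ‖s‖ ^ 2 =
      b ^ 2 + ‖z‖ ^ 2 + 2 * b * ‖z‖ * Real.cos z.arg := by
    have h1 : ‖s ^ 2‖ = ‖s‖ ^ 2 := norm_pow _ _
    have h2 : ‖s‖ ^ 2 * ‖s‖ ^ 2 = ‖(b : ℂ) + z‖ ^ 2 := by
      rw [← h1, ← hs]; ring
    rw [h2, Complex.sq_norm, Complex.normSq_apply]
    simp [Complex.add_re, Complex.add_im]
    nlinarith [hzabs]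
  have hs0 : 0 ≤ ‖s‖ ^ 2 := by positivity
  have hx0 : 0 ≤ Real.cos (z.arg / 2) * (b + ‖z‖) :=
    mul_nonneg hc0 (by positivity)
  have hsq : (Real.cos (z.arg / 2) * (b + ‖z‖)) *
      (Real.cos (z.arg / 2) * (b + ‖z‖)) ≤
      ‖s‖ ^ 2 * ‖s‖ ^ 2 := by
    nlinarith [sq_nonneg (b - ‖z‖),
      mul_nonneg (sub_nonneg.mpr (mul_le_one₀ hc1 hc0 hc1)) (sq_nonneg (b - ‖z‖))]
  have first : ‖s‖ ^ 2 ≥ Real.cos (z.arg / 2) * (b + ‖z‖) := by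
    nlinarith [hsq, hx0, hs0]
  refine ⟨first, fun _ => ?_⟩
  have hres : (s ^ 2).re = b + z.re := by rw [hs]; simp
  have hre2 : (s ^ 2).re = s.re ^ 2 - s.im ^ 2 := by
    simp [pow_two, Complex.mul_re]
  have habss : ‖s‖ ^ 2 = s.re ^ 2 + s.im ^ 2 := by
    rw [Complex.sq_norm, Complex.normSq_apply]; ring
  nlinarith [first]
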